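/- arXiv:math/0511642 — 5 statements merged into one kernel-verified Lean document; each statement's English description precedes it below -/
import Mathlib

section
/- Let M be a nonzero finite-dimensional A-module. Then the R-linear endomorphism of M̃ = R ⊗_k M given by the action of the generic element Id = Σ_{i=1}^d x_i ⊗ f_i is injective; consequently 0 → M̃ → M̃ → F_1(M) → 0 is a short exact sequence of R-modules. -/
open TensorProduct

noncomputable section FlCore

variable (k : Type) [Field k] {A : Type} [Ring A] [Algebra k A]

/-- The ring of polynomial functions on `A^l`, w.r.t. a basis of `A` indexed by `Fin d`. -/
abbrev polyR (k : Type) [Field k] (d l : ℕ) : Type := MvPolynomial (Fin d × Fin l) k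

variable {M : Type}
  [AddCommGroup M] [Module k M] [Module A M] [IsScalarTower k A M]

/-- The `k`-linear action of `a : A` on an `A`-module. -/
def actL (a : A) : M →ₗ[k] M := Algebra.lsmul k k M a

variable {d l : ℕ} (b : Module.Basis (Fin d) k A)

/-- The generic element `Id_j = ∑ i, x_{ij} ⊗ f_i` acting `R`-linearly on `M̃ = R ⊗[k] M`. -/
def genId (j : Fin l) :
    polyR k d l ⊗[k] M →ₗ[polyR k d l] polyR k d l ⊗[k] M :=
  ∑ i : Fin d, (MvPolynomial.X (i, j) : polyR k d l) •
    LinearMap.baseChange (polyR k d l) (actL k (b i) : M →ₗ[k] M)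

/-- The submodule `Id_1·M̃ + ⋯ + Id_l·M̃` of `M̃ = R ⊗[k] M`, so that
`F_l(M) = M̃ ⧸ genSub`. -/
def genSub : Submodule (polyR k d l) (polyR k d l ⊗[k] M) :=
  ⨆ j : Fin l, LinearMap.range (genId k b (M := M) j)

end FlCore


set_option maxHeartbeats 1000000
set_option synthInstance.maxHeartbeats 400000

section Aux

variable (k : Type) [Field k] {A : Type} [Ring A] [Algebra k A]
  {M : Type} [AddCommGroup M] [Module k M] [Module A M] [IsScalarTower k A M]
  [Module.Finite k M] {d : ℕ} (b : Module.Basis (Fin d) k A)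

/-- Evaluating the matrix of the generic element at the coordinates of `1 : A`
gives the identity, so its determinant is a nonzero polynomial. -/
lemma det_genId_ne_zero :
    (LinearMap.toMatrix
      (Algebra.TensorProduct.basis (polyR k d 1) (Module.finBasis k M))
      (Algebra.TensorProduct.basis (polyR k d 1) (Module.finBasis k M))
      (genId k b (M := M) (l := 1) 0)).det ≠ 0 := by
  set R := polyR k d 1
  set m := Module.finBasis k M
  set bR := Algebra.TensorProduct.basis R m with hbR
  set N := LinearMap.toMatrix bR bR (genId k b (M := M) (l := 1) 0) with hN
  have hNeq : N = ∑ i : Fin d, (MvPolynomial.X (i, 0) : R) •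
      (LinearMap.toMatrix m m (actL k (b i))).map (algebraMap k R) := by
    rw [hN, genId, map_sum]
    refine Finset.sum_congr rfl fun i _ => ?_
    rw [map_smul, hbR, LinearMap.toMatrix_baseChange]
  set φ : R →+* k := (MvPolynomial.aeval (fun p : Fin d × Fin 1 => b.repr 1 p.1)).toRingHom with hφ
  have hmap : N.map φ =
      LinearMap.toMatrix m m (∑ i : Fin d, b.repr 1 i • actL k (b i) : M →ₗ[k] M) := by
    rw [map_sum]
    ext p q
    rw [hNeq]
    simp only [Matrix.map_apply, Matrix.sum_apply, map_sum, Matrix.smul_apply, smul_eq_mul,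
      map_mul, map_smul]
    refine Finset.sum_congr rfl fun i _ => ?_
    have h1 : φ (MvPolynomial.X (i, (0 : Fin 1))) = b.repr 1 i := by
      exact MvPolynomial.eval_X (i, 0)
    have h2 : φ (algebraMap k R (LinearMap.toMatrix m m (actL k (b i)) p q)) =
        LinearMap.toMatrix m m (actL k (b i)) p q := by
      exact MvPolynomial.eval_C _
    rw [h1, h2]
  have h1 : (∑ i : Fin d, b.repr 1 i • actL k (b i) : M →ₗ[k] M) = LinearMap.id := by
    ext x
    simp only [LinearMap.coe_sum, Finset.sum_apply, LinearMap.smul_apply, LinearMap.id_coe,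
      id_eq, actL, Algebra.lsmul_coe]
    calc ∑ i : Fin d, b.repr 1 i • b i • x = ∑ i : Fin d, (b.repr 1 i • b i) • x := by
          simp [smul_assoc]
      _ = (∑ i : Fin d, b.repr 1 i • b i) • x := by rw [Finset.sum_smul]
      _ = (1 : A) • x := by rw [b.sum_repr 1]
      _ = x := one_smul A x
  intro hdet
  have : φ N.det = 1 := by
    rw [RingHom.map_det, RingHom.mapMatrix_apply, hmap, h1, LinearMap.toMatrix_id,
      Matrix.det_one]
  rw [hdet, map_zero] at this
  exact zero_ne_one this

end Aux

/-- For a nonzero finite-dimensional module `M` over a finite-dimensional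
unital `k`-algebra `A` (with basis `b`), the action of the generic element
`Id = ∑ i, x_i ⊗ f_i` on `M̃ = R ⊗[k] M` is injective; consequently
`0 → M̃ → M̃ → F_1(M) → 0` is a short exact sequence of `R`-modules. -/
theorem statement0 (k : Type) [Field k] {A : Type} [Ring A] [Algebra k A]
    {d : ℕ} (b : Module.Basis (Fin d) k A)
    (M : Type) [AddCommGroup M] [Module k M] [Module A M] [IsScalarTower k A M]
    [Module.Finite k M] [Nontrivial M] :
    Function.Injective (genId k b (M := M) (l := 1) 0) ∧
    Function.Exact (genId k b (M := M) (l := 1) 0)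
      (Submodule.mkQ (genSub k (l := 1) b (M := M))) ∧
    Function.Surjective (Submodule.mkQ (genSub k (l := 1) b (M := M))) := by
  have hsub : genSub k (l := 1) b (M := M) =
      LinearMap.range (genId k b (M := M) (l := 1) 0) := by
    rw [genSub, iSup_unique]
    rfl
  refine ⟨?_, ?_, Submodule.mkQ_surjective _⟩
  · set m := Module.finBasis k M
    set bR := Algebra.TensorProduct.basis (polyR k d 1) m with hbR
    have hdet := det_genId_ne_zero k b (M := M)
    rw [← LinearMap.ker_eq_bot, Submodule.eq_bot_iff]
    intro v hv
    have hmv : (LinearMap.toMatrix bR bR (genId k b (M := M) (l := 1) 0)).mulVec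
        (⇑(bR.repr v)) = 0 := by
      have h2 := LinearMap.toMatrix_mulVec_repr bR bR (genId k b (M := M) (l := 1) 0) v
      rw [h2, hv, map_zero]
      rfl
    have hrepr : (⇑(bR.repr v) : Fin (Module.finrank k M) → polyR k d 1) = 0 := by
      by_contra h
      exact hdet (Matrix.exists_mulVec_eq_zero_iff.mp ⟨_, h, hmv⟩)
    have : bR.repr v = 0 := Finsupp.ext fun i => congrFun hrepr i
    simpa using congrArg bR.repr.symm this
  · rw [hsub]
    exact LinearMap.exact_map_mkQ_range _
end

section
/- For every short exact sequence 0 → M → N → P → 0 of finite-dimensional A-modules, the induced sequence 0 → F_1(M) → F_1(N) → F_1(P) → 0 of graded R-modules is exact; that is, the functor F_1 is exact on finite-dimensional A-modules. -/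
open TensorProduct

noncomputable section FlCore

variable (k : Type) [Field k] {A : Type} [Ring A] [Algebra k A]

variable {M N : Type}
  [AddCommGroup M] [Module k M] [Module A M] [IsScalarTower k A M]
  [AddCommGroup N] [Module k N] [Module A N] [IsScalarTower k A N]

variable {d l : ℕ} (b : Module.Basis (Fin d) k A)

/-- Restriction of scalars of an `A`-linear map to a `k`-linear map. -/
def restrictK (f : M →ₗ[A] N) : M →ₗ[k] N where
  toFun := f
  map_add' := map_add f
  map_smul' c m := by
    show f (c • m) = c • f m
    rw [← algebraMap_smul A c m, map_smul, algebraMap_smul]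

/-- The induced degree-0 graded homomorphism `F_l(M) → F_l(N)`. -/
def Fmap (f : M →ₗ[A] N) :
    (polyR k d l ⊗[k] M ⧸ genSub k (l := l) b (M := M)) →ₗ[polyR k d l]
      (polyR k d l ⊗[k] N ⧸ genSub k (l := l) b (M := N)) :=
  Submodule.mapQ _ _ (LinearMap.baseChange (polyR k d l) (restrictK k f)) (by
    refine iSup_le fun j => ?_
    rintro x ⟨y, rfl⟩
    refine Submodule.mem_iSup_of_mem j ⟨LinearMap.baseChange (polyR k d l) (restrictK k f) y, ?_⟩
    have hc : ∀ i : Fin d,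
        (LinearMap.baseChange (polyR k d l) (actL k (b i) : N →ₗ[k] N)).comp
          (LinearMap.baseChange (polyR k d l) (restrictK k f))
        = (LinearMap.baseChange (polyR k d l) (restrictK k f)).comp
          (LinearMap.baseChange (polyR k d l) (actL k (b i) : M →ₗ[k] M)) := by
      intro i
      rw [← LinearMap.baseChange_comp, ← LinearMap.baseChange_comp]
      congr 1
      ext m
      show (b i) • (f m) = f ((b i) • m)
      rw [map_smul]
    have : ∀ z, (genId k b (M := N) j) (LinearMap.baseChange (polyR k d l) (restrictK k f) z)
        = LinearMap.baseChange (polyR k d l) (restrictK k f) ((genId k b (M := M) j) z) := by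
      intro z
      simp only [genId, LinearMap.sum_apply, LinearMap.smul_apply, map_sum, map_smul]
      refine Finset.sum_congr rfl fun i _ => ?_
      congr 1
      have := DFunLike.congr_fun (hc i) z
      simpa using this
    exact this y)

end FlCore


noncomputable section Aux2

open TensorProduct

variable (k : Type) [Field k] {A : Type} [Ring A] [Algebra k A]
variable {M N : Type}
  [AddCommGroup M] [Module k M] [Module A M] [IsScalarTower k A M]
  [AddCommGroup N] [Module k N] [Module A N] [IsScalarTower k A N]
variable {d l : ℕ} (b : Module.Basis (Fin d) k A)

lemma genId_comm (f : M →ₗ[A] N) (j : Fin l) (z : polyR k d l ⊗[k] M) :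
    genId k b (M := N) j (LinearMap.baseChange (polyR k d l) (restrictK k f) z)
      = LinearMap.baseChange (polyR k d l) (restrictK k f) (genId k b (M := M) j z) := by
  have hc : ∀ i : Fin d,
      (LinearMap.baseChange (polyR k d l) (actL k (b i) : N →ₗ[k] N)).comp
        (LinearMap.baseChange (polyR k d l) (restrictK k f))
      = (LinearMap.baseChange (polyR k d l) (restrictK k f)).comp
        (LinearMap.baseChange (polyR k d l) (actL k (b i) : M →ₗ[k] M)) := by
    intro i
    rw [← LinearMap.baseChange_comp, ← LinearMap.baseChange_comp]
    congr 1
    ext m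
    show (b i) • (f m) = f ((b i) • m)
    rw [map_smul]
  simp only [genId, LinearMap.sum_apply, LinearMap.smul_apply, map_sum, map_smul]
  refine Finset.sum_congr rfl fun i _ => ?_
  congr 1
  have := DFunLike.congr_fun (hc i) z
  simpa using this

lemma genSub_eq_range :
    genSub k (l := 1) b (M := M) = LinearMap.range (genId k b (M := M) 0) := by
  show (⨆ j : Fin 1, LinearMap.range (genId k b (M := M) j)) = _
  refine le_antisymm (iSup_le fun j => ?_) (le_iSup (fun j : Fin 1 => LinearMap.range (genId k b (M := M) j)) 0)
  rw [Subsingleton.elim j 0]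

set_option synthInstance.maxHeartbeats 1000000 in
set_option maxHeartbeats 1000000 in
lemma genId_injective [Module.Finite k M] (j : Fin l) :
    Function.Injective (genId k b (M := M) j) := by
  classical
  set R := polyR k d l with hRdef
  set n := Module.finrank k M with hn
  set bM : Module.Basis (Fin n) k M := Module.finBasis k M with hbM
  set bR : Module.Basis (Fin n) R (R ⊗[k] M) := Algebra.TensorProduct.basis R bM with hbR
  set T : Matrix (Fin n) (Fin n) R := LinearMap.toMatrix bR bR (genId k b (M := M) j) with hT
  -- the matrix of the generic element
  have hTsum : T = ∑ i : Fin d, (MvPolynomial.X (i, j) : R) •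
      ((LinearMap.toMatrix bM bM (actL k (b i) : M →ₗ[k] M)).map (algebraMap k R)) := by
    rw [hT, genId, map_sum]
    refine Finset.sum_congr rfl fun i _ => ?_
    rw [map_smul]
    congr 1
    exact LinearMap.toMatrix_baseChange R (actL k (b i)) bM bM
  -- evaluation at the coordinates of 1
  set c : Fin d × Fin l → k := fun p => b.repr 1 p.1 with hc
  set ev : R →+* k := (MvPolynomial.eval c : R →+* k) with hev
  have hone : ∑ i : Fin d, (b.repr 1 i) • (actL k (b i) : M →ₗ[k] M)
      = (LinearMap.id : M →ₗ[k] M) := by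
    ext m
    simp only [LinearMap.coe_sum, Finset.sum_apply, LinearMap.smul_apply, LinearMap.id_apply]
    have : ∀ i : Fin d, (b.repr 1 i) • (actL k (b i) : M →ₗ[k] M) m
        = ((b.repr 1 i) • b i) • m := by
      intro i
      show (b.repr 1 i) • ((b i) • m) = ((b.repr 1 i) • b i) • m
      rw [smul_assoc]
    rw [Finset.sum_congr rfl fun i _ => this i, ← Finset.sum_smul, Module.Basis.sum_repr b 1, one_smul]
  have hmap : T.map ev = 1 := by
    have hRR : (LinearMap.toMatrix bM bM)
        (∑ i : Fin d, (b.repr 1 i) • (actL k (b i) : M →ₗ[k] M))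
        = ∑ i : Fin d, (b.repr 1 i) • LinearMap.toMatrix bM bM (actL k (b i)) := by
      rw [map_sum]
      exact Finset.sum_congr rfl fun i _ => map_smul _ _ _
    ext p q
    have step1 : (T.map ev) p q
        = ∑ i : Fin d, (b.repr 1 i) * (LinearMap.toMatrix bM bM (actL k (b i) : M →ₗ[k] M)) p q := by
      rw [hTsum]
      simp only [Matrix.map_apply, Matrix.sum_apply, Matrix.smul_apply, smul_eq_mul, map_sum,
        map_mul, hev]
      refine Finset.sum_congr rfl fun i _ => ?_
      rw [MvPolynomial.algebraMap_eq, MvPolynomial.eval_C, MvPolynomial.eval_X]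
    rw [step1]
    have step2 : ∑ i : Fin d, (b.repr 1 i) * (LinearMap.toMatrix bM bM (actL k (b i) : M →ₗ[k] M)) p q
        = (LinearMap.toMatrix bM bM (∑ i : Fin d, (b.repr 1 i) • (actL k (b i) : M →ₗ[k] M))) p q := by
      rw [hRR, Matrix.sum_apply]
      exact Finset.sum_congr rfl fun i _ => rfl
    rw [step2, hone, LinearMap.toMatrix_id]
  have hdet : T.det ≠ 0 := by
    intro h0
    have := RingHom.map_det ev T
    rw [RingHom.mapMatrix_apply, h0, hmap, Matrix.det_one, map_zero] at this
    exact one_ne_zero this.symm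
  -- now deduce injectivity
  have key : ∀ z : R ⊗[k] M, genId k b (M := M) j z = 0 → z = 0 := by
    intro z hz
    have hmv : T.mulVec (bR.repr z) = 0 := by
      rw [hT, LinearMap.toMatrix_mulVec_repr, hz, map_zero]
      rfl
    have : ∀ p : Fin n, T.det * (bR.repr z) p = 0 := by
      intro p
      have h1 : (T.adjugate * T).mulVec ⇑(bR.repr z) = 0 := by
        rw [← Matrix.mulVec_mulVec, hmv, Matrix.mulVec_zero]
      rw [Matrix.adjugate_mul, Matrix.smul_mulVec, Matrix.one_mulVec] at h1
      have := congrFun h1 p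
      simpa using this
    have hz0 : bR.repr z = 0 := by
      refine Finsupp.ext fun p => ?_
      rcases mul_eq_zero.mp (this p) with h | h
      · exact absurd h hdet
      · simpa using h
    have := congrArg bR.repr.symm hz0
    simpa using this
  intro x y hxy
  have : genId k b (M := M) j (x - y) = 0 := by rw [map_sub, hxy, sub_self]
  have := key _ this
  exact sub_eq_zero.mp this

end Aux2

set_option maxHeartbeats 1000000 in
set_option synthInstance.maxHeartbeats 1000000 in
/-- The functor `F_1` is exact: every short exact sequence
`0 → M → N → P → 0` of finite-dimensional `A`-modules induces a short exact sequence
`0 → F_1(M) → F_1(N) → F_1(P) → 0` of graded `R`-modules. -/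
theorem statement2 (k : Type) [Field k] {A : Type} [Ring A] [Algebra k A]
    {d : ℕ} (b : Module.Basis (Fin d) k A)
    (M N P : Type)
    [AddCommGroup M] [Module k M] [Module A M] [IsScalarTower k A M] [Module.Finite k M]
    [AddCommGroup N] [Module k N] [Module A N] [IsScalarTower k A N] [Module.Finite k N]
    [AddCommGroup P] [Module k P] [Module A P] [IsScalarTower k A P] [Module.Finite k P]
    (f : M →ₗ[A] N) (g : N →ₗ[A] P)
    (hf : Function.Injective f) (hg : Function.Surjective g)
    (hfg : Function.Exact f g) :
    Function.Injective (Fmap k (l := 1) b f) ∧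
    Function.Exact (Fmap k (l := 1) b f) (Fmap k (l := 1) b g) ∧
    Function.Surjective (Fmap k (l := 1) b g) := by
  classical
  set R := polyR k d 1 with hR
  set f' := LinearMap.baseChange R (restrictK k f) with hf'def
  set g' := LinearMap.baseChange R (restrictK k g) with hg'def
  -- base change is exact over a field
  have hker : Function.Exact (restrictK k f) (restrictK k g) := hfg
  have hf'inj : Function.Injective f' := by
    rw [hf'def]
    have : (⇑(LinearMap.baseChange R (restrictK k f)) :
        R ⊗[k] M → R ⊗[k] N) = ⇑((restrictK k f).lTensor R) :=
      LinearMap.baseChange_eq_ltensor (restrictK k f)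
    rw [this]
    exact Module.Flat.lTensor_preserves_injective_linearMap _ hf
  have hg'surj : Function.Surjective g' := by
    rw [hg'def]
    have : (⇑(LinearMap.baseChange R (restrictK k g)) :
        R ⊗[k] N → R ⊗[k] P) = ⇑((restrictK k g).lTensor R) :=
      LinearMap.baseChange_eq_ltensor (restrictK k g)
    rw [this]
    exact LinearMap.lTensor_surjective R hg
  have hexact' : Function.Exact f' g' := by
    rw [hf'def, hg'def]
    have h1 : (⇑(LinearMap.baseChange R (restrictK k f)) :
        R ⊗[k] M → R ⊗[k] N) = ⇑((restrictK k f).lTensor R) :=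
      LinearMap.baseChange_eq_ltensor (restrictK k f)
    have h2 : (⇑(LinearMap.baseChange R (restrictK k g)) :
        R ⊗[k] N → R ⊗[k] P) = ⇑((restrictK k g).lTensor R) :=
      LinearMap.baseChange_eq_ltensor (restrictK k g)
    show Function.Exact (⇑(LinearMap.baseChange R (restrictK k f)))
      (⇑(LinearMap.baseChange R (restrictK k g)))
    rw [h1, h2]
    exact Module.Flat.lTensor_exact R hker
  -- membership in genSub
  have memM : ∀ x : R ⊗[k] M, x ∈ genSub k (l := 1) b (M := M) ↔
      ∃ y, genId k b (M := M) 0 y = x := by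
    intro x; rw [genSub_eq_range]; exact Iff.rfl
  have memN : ∀ x : R ⊗[k] N, x ∈ genSub k (l := 1) b (M := N) ↔
      ∃ y, genId k b (M := N) 0 y = x := by
    intro x; rw [genSub_eq_range]; exact Iff.rfl
  have memP : ∀ x : R ⊗[k] P, x ∈ genSub k (l := 1) b (M := P) ↔
      ∃ y, genId k b (M := P) 0 y = x := by
    intro x; rw [genSub_eq_range]; exact Iff.rfl
  have Fmapf : ∀ x : R ⊗[k] M, Fmap k (l := 1) b f (Submodule.Quotient.mk x)
      = Submodule.Quotient.mk (f' x) := by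
    intro x
    simp only [Fmap, Submodule.mapQ_apply]
    rfl
  have Fmapg : ∀ x : R ⊗[k] N, Fmap k (l := 1) b g (Submodule.Quotient.mk x)
      = Submodule.Quotient.mk (g' x) := by
    intro x
    simp only [Fmap, Submodule.mapQ_apply]
    rfl
  refine ⟨?_, ?_, ?_⟩
  · -- injectivity
    rw [← LinearMap.ker_eq_bot, Submodule.eq_bot_iff]
    rintro x hx
    obtain ⟨m, rfl⟩ := Submodule.Quotient.mk_surjective _ x
    rw [LinearMap.mem_ker, Fmapf, Submodule.Quotient.mk_eq_zero] at hx
    obtain ⟨y, hy⟩ := (memN _).mp hx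
    have hgy : genId k b (M := P) 0 (g' y) = 0 := by
      rw [hg'def, genId_comm k b g 0 y, ← hg'def, hy]
      have : g' (f' m) = 0 := hexact'.apply_apply_eq_zero m
      exact this
    have hy0 : g' y = 0 := by
      have := genId_injective k b (M := P) (l := 1) 0
      have h0 : genId k b (M := P) 0 (0 : R ⊗[k] P) = 0 := map_zero _
      exact this (hgy.trans h0.symm)
    obtain ⟨z, hz⟩ := (hexact' y).mp hy0
    have : f' (genId k b (M := M) 0 z) = f' m := by
      rw [hf'def, ← genId_comm k b f 0 z, ← hf'def, hz, hy]
    have hm : genId k b (M := M) 0 z = m := hf'inj this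
    rw [Submodule.Quotient.mk_eq_zero]
    exact (memM m).mpr ⟨z, hm⟩
  · -- exactness in the middle
    intro y0
    obtain ⟨nn, rfl⟩ := Submodule.Quotient.mk_surjective _ y0
    constructor
    · intro h
      rw [Fmapg, Submodule.Quotient.mk_eq_zero] at h
      obtain ⟨y, hy⟩ := (memP _).mp h
      obtain ⟨w, hw⟩ := hg'surj y
      have hgw : g' (nn - genId k b (M := N) 0 w) = 0 := by
        rw [map_sub, hg'def, ← genId_comm k b g 0 w, ← hg'def, hw, hy, sub_self]
      obtain ⟨m, hm⟩ := (hexact' _).mp hgw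
      refine ⟨Submodule.Quotient.mk m, ?_⟩
      rw [Fmapf, hm]
      rw [Submodule.Quotient.eq]
      rw [show nn - genId k b (M := N) 0 w - nn = -(genId k b (M := N) 0 w) by abel]
      exact Submodule.neg_mem _ ((memN _).mpr ⟨w, rfl⟩)
    · rintro ⟨x, hx⟩
      obtain ⟨m, rfl⟩ := Submodule.Quotient.mk_surjective _ x
      rw [← hx, Fmapf, Fmapg, Submodule.Quotient.mk_eq_zero,
        show g' (f' m) = 0 from hexact'.apply_apply_eq_zero m]
      exact Submodule.zero_mem _
  · -- surjectivity
    intro y0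
    obtain ⟨p, rfl⟩ := Submodule.Quotient.mk_surjective _ y0
    obtain ⟨nn, hn⟩ := hg'surj p
    exact ⟨Submodule.Quotient.mk nn, by rw [Fmapg, hn]⟩
end

section
/- For every integer l ≥ 1 and all finite-dimensional A-modules M and N, the natural map from Hom_A(M,N) to the space of degree-0 graded R-module homomorphisms F_l(M) → F_l(N), sending f to F_l(f), is a bijection; that is, F_l is a fully faithful functor from finite-dimensional A-modules to graded R-modules with degree-0 homomorphisms. -/
open TensorProduct

noncomputable section Graded

variable (k : Type) [Field k] {A : Type} [Ring A] [Algebra k A]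
variable {M N : Type}
  [AddCommGroup M] [Module k M] [Module A M] [IsScalarTower k A M]
  [AddCommGroup N] [Module k N] [Module A N] [IsScalarTower k A N]
variable {d l : ℕ} (b : Module.Basis (Fin d) k A)

/-- The degree-`m` homogeneous component of `F_l(M)`, namely the `k`-subspace spanned by
the images of the pure tensors `p ⊗ v` with `p` a homogeneous polynomial of degree `m`. -/
def flComp (m : ℕ) :
    Submodule k (polyR k d l ⊗[k] M ⧸ genSub k (l := l) b (M := M)) :=
  Submodule.span k
    ((Submodule.mkQ (genSub k (l := l) b (M := M))) ''
      {x | ∃ (p : polyR k d l) (v : M),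
        p ∈ MvPolynomial.homogeneousSubmodule (Fin d × Fin l) k m ∧ x = p ⊗ₜ[k] v})

/-- A homomorphism `F_l(M) → F_l(N)` is graded of degree `0` if it maps each homogeneous
component of degree `m` into the homogeneous component of degree `m`. -/
def IsGradedDegZero
    (φ : (polyR k d l ⊗[k] M ⧸ genSub k (l := l) b (M := M)) →ₗ[polyR k d l]
      (polyR k d l ⊗[k] N ⧸ genSub k (l := l) b (M := N))) : Prop :=
  ∀ (m : ℕ), ∀ x ∈ flComp k b (M := M) m, φ x ∈ flComp k b (M := N) m

end Graded


noncomputable section Aux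
open MvPolynomial

variable (k : Type) [Field k] {A : Type} [Ring A] [Algebra k A]
variable {M N : Type}
  [AddCommGroup M] [Module k M] [Module A M] [IsScalarTower k A M]
  [AddCommGroup N] [Module k N] [Module A N] [IsScalarTower k A N]
variable {d l : ℕ} (b : Module.Basis (Fin d) k A)

/-- Extract the coefficient of the monomial `s` (a `k`-linear map `R ⊗ M → M`). -/
def kap (s : Fin d × Fin l →₀ ℕ) : polyR k d l ⊗[k] M →ₗ[k] M :=
  (TensorProduct.lid k M).toLinearMap ∘ₗ LinearMap.rTensor M (MvPolynomial.lcoeff k s)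

@[simp] lemma kap_tmul (s : Fin d × Fin l →₀ ℕ) (p : polyR k d l) (m : M) :
    kap k s (p ⊗ₜ m) = MvPolynomial.coeff s p • m := by
  simp [kap]

lemma kap_baseChange (s : Fin d × Fin l →₀ ℕ) (f : M →ₗ[k] N) (x : polyR k d l ⊗[k] M) :
    kap k s (f.baseChange (polyR k d l) x) = f (kap k s x) := by
  induction x using TensorProduct.induction_on with
  | zero => simp
  | tmul p m => simp
  | add x y hx hy => simp [hx, hy]

lemma kap_X_smul (s : Fin d × Fin l →₀ ℕ) (e : Fin d × Fin l) (x : polyR k d l ⊗[k] M) :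
    kap k s ((MvPolynomial.X e : polyR k d l) • x) =
      if e ∈ s.support then kap k (s - Finsupp.single e 1) x else 0 := by
  induction x using TensorProduct.induction_on with
  | zero => simp
  | tmul p m =>
      rw [TensorProduct.smul_tmul']
      simp only [kap_tmul, smul_eq_mul, MvPolynomial.coeff_X_mul']
      split <;> simp
  | add x y hx hy =>
      rw [smul_add, map_add, hx, hy]
      split <;> simp

lemma kap_single_X_smul (i : Fin d) (j : Fin l) (e : Fin d × Fin l)
    (x : polyR k d l ⊗[k] M) :
    kap k (Finsupp.single (i, j) 1) ((MvPolynomial.X e : polyR k d l) • x) =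
      if e = (i, j) then kap k 0 x else 0 := by
  rw [kap_X_smul]
  rw [Finsupp.support_single_ne_zero _ one_ne_zero]
  by_cases h : e = (i, j)
  · subst h; simp
  · simp [h]

lemma actL_apply (a : A) (m : M) : actL k a m = a • m := rfl

lemma eps_genId (j0 : Fin l) (x : polyR k d l ⊗[k] M) :
    kap k 0 (genId k b (M := M) j0 x) = 0 := by
  simp only [genId, LinearMap.sum_apply, LinearMap.smul_apply, map_sum]
  refine Finset.sum_eq_zero fun i _ => ?_
  rw [kap_X_smul]
  simp

lemma kap_genId (i : Fin d) (j j0 : Fin l) (x : polyR k d l ⊗[k] M) :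
    kap k (Finsupp.single (i, j) 1) (genId k b (M := M) j0 x) =
      if j = j0 then b i • kap k 0 x else 0 := by
  simp only [genId, LinearMap.sum_apply, LinearMap.smul_apply, map_sum]
  have hterm : ∀ i' : Fin d,
      kap k (0 : Fin d × Fin l →₀ ℕ)
        ((LinearMap.baseChange (polyR k d l) (actL k (b i'))) x) = b i' • kap k 0 x :=
    fun i' => kap_baseChange k 0 (actL k (b i')) x
  rw [Finset.sum_congr rfl fun i' _ => kap_single_X_smul k i j (i', j0) _]
  by_cases hj : j = j0
  · subst hj
    rw [if_pos rfl]
    have : ∀ i' : Fin d, (((i', j) = (i, j)) ↔ (i' = i)) := by simp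
    rw [Finset.sum_congr rfl fun i' _ => by rw [if_congr (this i') rfl rfl, hterm i']]
    simp [Finset.sum_ite_eq']
  · rw [if_neg hj]
    refine Finset.sum_eq_zero fun i' _ => ?_
    rw [if_neg]
    simp only [Prod.mk.injEq, not_and]
    exact fun _ => fun h => hj h.symm

lemma eps_genSub {z : polyR k d l ⊗[k] M} (hz : z ∈ genSub k b (M := M)) :
    kap k 0 z = 0 := by
  refine Submodule.iSup_induction (motive := fun z => kap k 0 z = 0) _ hz ?_ (map_zero _) ?_
  · rintro j x ⟨y, rfl⟩
    exact eps_genId k b j y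
  · intro x y hx hy
    rw [map_add, hx, hy, add_zero]

lemma kap_genSub {z : polyR k d l ⊗[k] M} (hz : z ∈ genSub k b (M := M)) :
    ∃ n : Fin l → M, ∀ i j, kap k (Finsupp.single (i, j) 1) z = b i • n j := by
  refine Submodule.iSup_induction
    (motive := fun z => ∃ n : Fin l → M, ∀ i j, kap k (Finsupp.single (i, j) 1) z = b i • n j)
    _ hz ?_ ⟨0, by simp⟩ ?_
  · rintro j0 x ⟨y, rfl⟩
    refine ⟨fun j => if j = j0 then kap k 0 y else 0, fun i j => ?_⟩
    rw [kap_genId]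
    by_cases hj : j = j0 <;> simp [hj]
  · rintro x y ⟨n, hn⟩ ⟨n', hn'⟩
    exact ⟨n + n', fun i j => by rw [map_add, hn, hn', Pi.add_apply, smul_add]⟩

/-- The canonical map `M → F_l(M)`, `m ↦ [1 ⊗ m]`. -/
def iotaF : M →ₗ[k] (polyR k d l ⊗[k] M ⧸ genSub k (l := l) b (M := M)) where
  toFun m := Submodule.Quotient.mk ((1 : polyR k d l) ⊗ₜ m)
  map_add' x y := by
    show Submodule.Quotient.mk _ = Submodule.Quotient.mk _ + Submodule.Quotient.mk _
    rw [TensorProduct.tmul_add, Submodule.Quotient.mk_add]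
  map_smul' c m := by
    show Submodule.Quotient.mk _ = c • Submodule.Quotient.mk _
    rw [TensorProduct.tmul_smul, Submodule.Quotient.mk_smul]

lemma iotaF_apply (m : M) :
    iotaF k b m = Submodule.Quotient.mk ((1 : polyR k d l) ⊗ₜ m) := rfl

lemma iotaF_inj : Function.Injective (iotaF k b (M := M) (l := l)) := by
  intro m m' h
  rw [iotaF_apply, iotaF_apply, Submodule.Quotient.eq, ← TensorProduct.tmul_sub] at h
  have h2 := eps_genSub k b h
  rw [kap_tmul] at h2
  simpa using sub_eq_zero.mp (by simpa using h2)

lemma homog0_eq_C {p : polyR k d l} (hp : p.IsHomogeneous 0) :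
    p = MvPolynomial.C (MvPolynomial.constantCoeff p) := by
  ext s
  by_cases hs : s = 0
  · subst hs; simp [MvPolynomial.constantCoeff_eq]
  · rw [MvPolynomial.coeff_C, if_neg (Ne.symm hs)]
    by_contra h
    refine hs (Finsupp.ext fun x => ?_)
    exact (MvPolynomial.totalDegree_eq_zero_iff _ p).mp
      ((MvPolynomial.totalDegree_zero_iff_isHomogeneous _).mpr hp) s
      (MvPolynomial.mem_support_iff.mpr h) x

lemma flComp_zero_le :
    flComp k b (M := M) 0 ≤ LinearMap.range (iotaF k b (M := M) (l := l)) := by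
  rw [flComp]
  refine Submodule.span_le.mpr ?_
  rintro x ⟨y, ⟨p, v, hp, rfl⟩, rfl⟩
  refine ⟨MvPolynomial.constantCoeff p • v, ?_⟩
  rw [MvPolynomial.mem_homogeneousSubmodule] at hp
  rw [iotaF_apply, TensorProduct.tmul_smul, TensorProduct.smul_tmul',
    MvPolynomial.smul_eq_C_mul, mul_one, Submodule.mkQ_apply, ← homog0_eq_C k hp]

lemma iotaF_mem_flComp (m : M) : iotaF k b m ∈ flComp k b (M := M) (l := l) 0 :=
  Submodule.subset_span ⟨(1 : polyR k d l) ⊗ₜ m,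
    ⟨1, m, (MvPolynomial.mem_homogeneousSubmodule _ _).mpr (MvPolynomial.isHomogeneous_one _ _),
      rfl⟩, rfl⟩


lemma genId_mem (j0 : Fin l) (x : polyR k d l ⊗[k] M) :
    genId k b (M := M) j0 x ∈ genSub k b (M := M) :=
  Submodule.mem_iSup_of_mem j0 ⟨x, rfl⟩

lemma genId_tmul (j0 : Fin l) (m : M) :
    genId k b (M := M) j0 ((1 : polyR k d l) ⊗ₜ m)
      = ∑ i : Fin d,
          (MvPolynomial.X (i, j0) : polyR k d l) • ((1 : polyR k d l) ⊗ₜ (b i • m)) := by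
  simp only [genId, LinearMap.sum_apply, LinearMap.smul_apply, LinearMap.baseChange_tmul,
    actL_apply]

end Aux

set_option maxHeartbeats 2000000

/-- For every `l ≥ 1`, the functor `F_l` is fully faithful as a functor into
graded `R`-modules with degree-0 homomorphisms: every induced map `F_l(f)` is graded of
degree `0`, and `f ↦ F_l(f)` is a bijection from `Hom_A(M, N)` onto the degree-0 graded
homomorphisms `F_l(M) → F_l(N)`. -/
theorem statement3 (k : Type) [Field k] {A : Type} [Ring A] [Algebra k A]
    {d l : ℕ} (hl : 1 ≤ l) (b : Module.Basis (Fin d) k A)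
    (M N : Type)
    [AddCommGroup M] [Module k M] [Module A M] [IsScalarTower k A M] [Module.Finite k M]
    [AddCommGroup N] [Module k N] [Module A N] [IsScalarTower k A N] [Module.Finite k N] :
    (∀ f : M →ₗ[A] N, IsGradedDegZero k b (Fmap k (l := l) b f)) ∧
    (∀ φ : (polyR k d l ⊗[k] M ⧸ genSub k (l := l) b (M := M)) →ₗ[polyR k d l]
        (polyR k d l ⊗[k] N ⧸ genSub k (l := l) b (M := N)),
      IsGradedDegZero k b φ → ∃! f : M →ₗ[A] N, Fmap k (l := l) b f = φ) := by
  classical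
  have φsmul : ∀ (φ : (polyR k d l ⊗[k] M ⧸ genSub k (l := l) b (M := M)) →ₗ[polyR k d l]
        (polyR k d l ⊗[k] N ⧸ genSub k (l := l) b (M := N))) (c : k) y,
      φ (c • y) = c • φ y := by
    intro φ c y
    rw [← algebraMap_smul (polyR k d l) c y, map_smul, algebraMap_smul]
  constructor
  · -- every induced map is graded of degree 0
    intro f m x hx
    rw [flComp] at hx
    induction hx using Submodule.span_induction with
    | mem y hy =>
        obtain ⟨z, ⟨p, v, hp, rfl⟩, rfl⟩ := hy
        have : Fmap k (l := l) b f ((genSub k (l := l) b (M := M)).mkQ (p ⊗ₜ v))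
            = (genSub k (l := l) b (M := N)).mkQ (p ⊗ₜ (restrictK k f v)) := by
          rw [Submodule.mkQ_apply, Submodule.mkQ_apply, Fmap]
          exact (Submodule.mapQ_apply ..).trans (congrArg _ (LinearMap.baseChange_tmul _ _ _))
        rw [this]
        exact Submodule.subset_span ⟨p ⊗ₜ (restrictK k f v), ⟨p, restrictK k f v, hp, rfl⟩, rfl⟩
    | zero => rw [map_zero]; exact Submodule.zero_mem _
    | add u v hu hv ihu ihv => rw [map_add]; exact Submodule.add_mem _ ihu ihv
    | smul c u hu ihu => rw [φsmul]; exact Submodule.smul_mem _ _ ihu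
  · -- full faithfulness
    intro φ hφ
    have hinj := iotaF_inj k b (M := N) (l := l)
    have hrange : ∀ m : M, ∃ n : N, iotaF k b n = φ (iotaF k b m) := fun m =>
      flComp_zero_le k b (hφ 0 _ (iotaF_mem_flComp k b m))
    choose g0 hg0 using hrange
    let gL : M →ₗ[k] N :=
      { toFun := g0
        map_add' := fun x y => hinj (by
          rw [map_add (iotaF k b (M := N)) (g0 x) (g0 y), hg0, hg0, hg0, ← map_add φ,
            ← map_add (iotaF k b (M := M)) x y])
        map_smul' := fun c x => hinj (by
          show iotaF k b (g0 (c • x)) = iotaF k b ((RingHom.id k) c • g0 x)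
          rw [RingHom.id_apply, map_smul (iotaF k b (M := N)) c (g0 x), hg0, hg0,
            map_smul (iotaF k b (M := M)) c x, φsmul φ]) }
    have hgL : ∀ m : M, iotaF k b (gL m) = φ (iotaF k b m) := hg0
    let j0 : Fin l := ⟨0, hl⟩
    -- commutation with basis elements
    have hbasis : ∀ (m : M) (i : Fin d), gL (b i • m) = b i • gL m := by
      intro m
      set w1 : polyR k d l ⊗[k] N := ∑ i : Fin d,
        (MvPolynomial.X (i, j0) : polyR k d l) • ((1 : polyR k d l) ⊗ₜ gL (b i • m)) with hw1
      set w2 : polyR k d l ⊗[k] N :=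
        genId k b (M := N) j0 ((1 : polyR k d l) ⊗ₜ gL m) with hw2
      have e1 : (∑ i : Fin d, (MvPolynomial.X (i, j0) : polyR k d l) •
            (iotaF k b (M := M) (b i • m)))
          = (genSub k (l := l) b (M := M)).mkQ
              (genId k b (M := M) j0 ((1 : polyR k d l) ⊗ₜ m)) := by
        rw [genId_tmul, map_sum]
        simp only [map_smul]
        rfl
      have h3 : (∑ i : Fin d, (MvPolynomial.X (i, j0) : polyR k d l) •
          (iotaF k b (l := l) (gL (b i • m)))) = 0 := by
        calc (∑ i : Fin d, (MvPolynomial.X (i, j0) : polyR k d l) •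
              (iotaF k b (l := l) (gL (b i • m))))
            = ∑ i : Fin d, (MvPolynomial.X (i, j0) : polyR k d l) •
              φ (iotaF k b (b i • m)) := by simp only [hgL]
          _ = φ (∑ i : Fin d, (MvPolynomial.X (i, j0) : polyR k d l) •
              (iotaF k b (b i • m))) := by rw [map_sum]; simp only [map_smul]
          _ = 0 := by
              rw [e1, Submodule.mkQ_apply,
                (Submodule.Quotient.mk_eq_zero _).mpr (genId_mem k b j0 _), map_zero]
      have hw1mem : w1 ∈ genSub k b (M := N) := by
        rw [← Submodule.Quotient.mk_eq_zero]
        have : (Submodule.Quotient.mk w1 :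
            polyR k d l ⊗[k] N ⧸ genSub k (l := l) b (M := N))
            = (genSub k (l := l) b (M := N)).mkQ w1 := rfl
        rw [this, hw1, map_sum]
        simp only [map_smul]
        exact h3
      have hsub : w1 - w2 ∈ genSub k b (M := N) :=
        sub_mem hw1mem (genId_mem k b j0 _)
      obtain ⟨n, hn⟩ := kap_genSub k b hsub
      have h7 : ∀ i : Fin d, kap k (Finsupp.single (i, j0) 1) (w1 - w2)
          = gL (b i • m) - b i • gL m := by
        intro i
        rw [map_sub, hw1, hw2, genId_tmul, map_sum, map_sum]
        simp only [kap_single_X_smul, Prod.mk.injEq, and_true, kap_tmul]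
        rw [Finset.sum_ite_eq' Finset.univ i, Finset.sum_ite_eq' Finset.univ i]
        simp [MvPolynomial.coeff_zero_one]
      have h8 : ∀ i : Fin d, gL (b i • m) - b i • gL m = b i • n j0 := by
        intro i
        rw [← h7 i, hn i j0]
      have hA : ∑ i : Fin d, (b.repr 1) i • gL (b i • m) = gL m := by
        have : ∑ i : Fin d, (b.repr 1) i • gL (b i • m)
            = gL ((∑ i : Fin d, (b.repr 1) i • b i) • m) := by
          rw [Finset.sum_smul, map_sum]
          exact Finset.sum_congr rfl fun i _ => by rw [smul_assoc]; exact (map_smul gL _ _).symm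
        rw [this, Module.Basis.sum_repr, one_smul]
      have hB : ∑ i : Fin d, (b.repr 1) i • (b i • gL m) = gL m := by
        have : ∑ i : Fin d, (b.repr 1) i • (b i • gL m)
            = (∑ i : Fin d, (b.repr 1) i • b i) • gL m := by
          rw [Finset.sum_smul]
          exact Finset.sum_congr rfl fun i _ => (smul_assoc _ _ _).symm
        rw [this, Module.Basis.sum_repr, one_smul]
      have hC : ∑ i : Fin d, (b.repr 1) i • (b i • n j0) = n j0 := by
        have : ∑ i : Fin d, (b.repr 1) i • (b i • n j0)
            = (∑ i : Fin d, (b.repr 1) i • b i) • n j0 := by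
          rw [Finset.sum_smul]
          exact Finset.sum_congr rfl fun i _ => (smul_assoc _ _ _).symm
        rw [this, Module.Basis.sum_repr, one_smul]
      have hn0 : n j0 = 0 := by
        have hsum : ∑ i : Fin d, (b.repr 1) i • (gL (b i • m) - b i • gL m)
            = ∑ i : Fin d, (b.repr 1) i • (b i • n j0) :=
          Finset.sum_congr rfl fun i _ => by rw [h8 i]
        rw [hC] at hsum
        rw [← hsum]
        simp only [smul_sub]
        rw [Finset.sum_sub_distrib, hA, hB, sub_self]
      intro i
      have := h8 i
      rw [hn0, smul_zero, sub_eq_zero] at this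
      exact this
    -- full A-linearity
    have key : ∀ (a : A) (m : M), gL (a • m) = a • gL m := by
      intro a m
      calc gL (a • m) = gL ((∑ i : Fin d, (b.repr a) i • b i) • m) := by rw [Module.Basis.sum_repr]
        _ = ∑ i : Fin d, (b.repr a) i • gL (b i • m) := by
            rw [Finset.sum_smul, map_sum]
            exact Finset.sum_congr rfl fun i _ => by rw [smul_assoc]; exact map_smul gL _ _
        _ = ∑ i : Fin d, (b.repr a) i • (b i • gL m) :=
            Finset.sum_congr rfl fun i _ => by rw [hbasis m i]
        _ = (∑ i : Fin d, (b.repr a) i • b i) • gL m := by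
            rw [Finset.sum_smul]
            exact Finset.sum_congr rfl fun i _ => (smul_assoc _ _ _).symm
        _ = a • gL m := by rw [Module.Basis.sum_repr]
    let fA : M →ₗ[A] N :=
      { toFun := gL
        map_add' := map_add gL
        map_smul' := fun a m => key a m }
    have hFmapι : ∀ (f : M →ₗ[A] N) (m : M),
        Fmap k (l := l) b f (iotaF k b m) = iotaF k b (f m) := by
      intro f m
      rw [iotaF_apply, Fmap]
      exact (Submodule.mapQ_apply ..).trans (congrArg _ (LinearMap.baseChange_tmul _ _ _))
    refine ⟨fA, ?_, ?_⟩
    · apply LinearMap.ext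
      intro x
      obtain ⟨z, rfl⟩ := Submodule.Quotient.mk_surjective _ x
      have hmk : ∀ z : polyR k d l ⊗[k] M, (Submodule.Quotient.mk z :
          polyR k d l ⊗[k] M ⧸ genSub k (l := l) b (M := M))
          = (genSub k (l := l) b (M := M)).mkQ z := fun _ => rfl
      induction z using TensorProduct.induction_on with
      | zero => rw [Submodule.Quotient.mk_zero, map_zero, map_zero]
      | tmul p v =>
          have hpv : (Submodule.Quotient.mk (p ⊗ₜ v) :
              polyR k d l ⊗[k] M ⧸ genSub k (l := l) b (M := M))
              = p • iotaF k b v := by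
            rw [iotaF_apply, ← Submodule.Quotient.mk_smul, TensorProduct.smul_tmul',
              smul_eq_mul, mul_one]
          rw [hpv, map_smul, map_smul, hFmapι fA v]
          rw [show fA v = gL v from rfl, hgL]
      | add u v hu hv =>
          rw [Submodule.Quotient.mk_add, map_add, map_add, hu, hv]
    · intro f hf
      apply LinearMap.ext
      intro m
      apply hinj
      have h1 : iotaF k b (f m) = φ (iotaF k b m) := by
        rw [← hFmapι f m, hf]
      rw [h1, show fA m = gL m from rfl, hgL]
end

section
/- Let k be a field, n ≥ 1, R = k[x_{ij} : 1 ≤ i,j ≤ n] the polynomial ring in n² variables, and X = (x_{ij}) the generic n × n matrix over R. Then the annihilator of the R-module coker(X : R^n → R^n) is the principal ideal generated by det X, and this ideal is prime. -/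
open MvPolynomial Matrix Equiv Finsupp

namespace Statement4Aux

variable {k : Type} [Field k] {n : ℕ}

noncomputable def mono (σ : Equiv.Perm (Fin n)) : (Fin n × Fin n) →₀ ℕ :=
  ∑ j, Finsupp.single (σ j, j) 1

lemma mono_apply (σ : Equiv.Perm (Fin n)) (i j : Fin n) :
    mono σ (i, j) = if σ j = i then 1 else 0 := by
  classical
  rw [mono, Finsupp.finset_sum_apply]
  rw [Finset.sum_eq_single j]
  · simp [Finsupp.single_apply, Prod.ext_iff]
  · intro b _ hb
    simp [Finsupp.single_apply, Prod.ext_iff, hb]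
  · simp

lemma mono_injective : Function.Injective (mono (n := n)) := by
  intro σ τ h
  apply Equiv.ext; intro j
  have := congrFun (congrArg DFunLike.coe h) (τ j, j)
  rw [mono_apply, mono_apply, if_pos rfl] at this
  by_contra hc
  rw [if_neg hc] at this
  exact (one_ne_zero (α := ℕ)) this.symm

lemma prod_X_eq (s : Finset (Fin n)) (p : Fin n → Fin n × Fin n) :
    (∏ j ∈ s, (X (p j) : MvPolynomial (Fin n × Fin n) k)) =
      monomial (∑ j ∈ s, Finsupp.single (p j) 1) 1 := by
  classical
  induction s using Finset.cons_induction with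
  | empty => simp
  | cons a s ha ih =>
      rw [Finset.prod_cons, Finset.sum_cons, ih, X, monomial_mul, one_mul]

/-- the generic matrix -/
noncomputable def GM (k : Type) [Field k] (n : ℕ) :
    Matrix (Fin n) (Fin n) (MvPolynomial (Fin n × Fin n) k) :=
  Matrix.of fun i j => MvPolynomial.X (i, j)

lemma det_GM : (GM k n).det =
    ∑ σ : Equiv.Perm (Fin n), monomial (mono σ) (((Equiv.Perm.sign σ : ℤ) : k)) := by
  rw [Matrix.det_apply]
  refine Finset.sum_congr rfl fun σ _ => ?_
  have : ∀ i : Fin n, GM k n (σ i) i = X (σ i, i) := fun _ => rfl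
  simp only [this]
  rw [prod_X_eq Finset.univ (fun i => (σ i, i))]
  rw [show (∑ j, Finsupp.single ((σ j, j) : Fin n × Fin n) 1) = mono σ from rfl]
  rw [Units.smul_def, zsmul_eq_mul,
    ← map_intCast (C : k →+* MvPolynomial (Fin n × Fin n) k), C_mul_monomial, mul_one]


lemma sign_cast_ne_zero (τ : Equiv.Perm (Fin n)) : ((Equiv.Perm.sign τ : ℤ) : k) ≠ 0 := by
  rcases Int.units_eq_one_or (Equiv.Perm.sign τ) with h | h <;> rw [h] <;> simp

lemma coeff_mono_det (τ : Equiv.Perm (Fin n)) :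
    coeff (mono τ) (GM k n).det = ((Equiv.Perm.sign τ : ℤ) : k) := by
  classical
  rw [det_GM, coeff_sum]
  rw [Finset.sum_eq_single τ]
  · rw [coeff_monomial, if_pos rfl]
  · intro σ _ hσ
    rw [coeff_monomial, if_neg (fun h => hσ (mono_injective h))]
  · simp

lemma det_GM_ne_zero : (GM k n).det ≠ 0 := by
  intro h
  have := coeff_mono_det (k := k) (1 : Equiv.Perm (Fin n))
  rw [h, coeff_zero] at this
  exact sign_cast_ne_zero 1 this.symm

lemma support_det_subset (m : (Fin n × Fin n) →₀ ℕ) (hm : m ∈ (GM k n).det.support) :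
    ∃ σ : Equiv.Perm (Fin n), m = mono σ := by
  classical
  by_contra h
  push_neg at h
  rw [MvPolynomial.mem_support_iff, det_GM, coeff_sum] at hm
  apply hm
  apply Finset.sum_eq_zero
  intro σ _
  rw [coeff_monomial, if_neg (fun he => h σ he.symm)]

lemma mono_le_one (σ : Equiv.Perm (Fin n)) (v : Fin n × Fin n) : mono σ v ≤ 1 := by
  obtain ⟨i, j⟩ := v
  rw [mono_apply]
  split <;> simp

lemma degreeOf_det_le_one (v : Fin n × Fin n) : degreeOf v (GM k n).det ≤ 1 := by
  rw [degreeOf_le_iff]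
  intro m hm
  obtain ⟨σ, rfl⟩ := support_det_subset m hm
  exact mono_le_one σ v


lemma pderiv_eq_zero_of_degreeOf_eq_zero {v : Fin n × Fin n} {p : MvPolynomial (Fin n × Fin n) k}
    (h : degreeOf v p = 0) : pderiv v p = 0 := by
  apply pderiv_eq_zero_of_notMem_vars
  intro hv
  rw [mem_vars] at hv
  obtain ⟨d, hd, hvd⟩ := hv
  have := (degreeOf_le_iff (d := 0)).mp h.le d hd
  rw [Finsupp.mem_support_iff] at hvd
  omega

lemma pderiv_pderiv_comm {τ : Type} [DecidableEq τ] (v w : τ) (p : MvPolynomial τ k) :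
    pderiv v (pderiv w p) = pderiv w (pderiv v p) := by
  induction p using MvPolynomial.induction_on' with
  | add p q hp hq => simp only [map_add, hp, hq]
  | monomial s a =>
    simp only [pderiv_monomial]
    by_cases hvw : v = w
    · subst hvw; rfl
    · congr 1
      · rw [tsub_tsub, tsub_tsub, add_comm]
      · rw [Finsupp.tsub_apply, Finsupp.tsub_apply, Finsupp.single_apply,
          if_neg (fun h => hvw h.symm), Finsupp.single_apply, if_neg hvw]
        push_cast [Nat.sub_zero]
        ring

lemma mono_sub_single_inj {σ τ : Equiv.Perm (Fin n)} {v : Fin n × Fin n}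
    (hσ : mono σ v = 1) (hτ : mono τ v = 1)
    (h : mono σ - Finsupp.single v 1 = mono τ - Finsupp.single v 1) : σ = τ := by
  apply mono_injective
  have h1 : Finsupp.single v 1 ≤ mono σ := by
    rw [Finsupp.single_le_iff, hσ]
  have h2 : Finsupp.single v 1 ≤ mono τ := by
    rw [Finsupp.single_le_iff, hτ]
  calc mono σ = mono σ - Finsupp.single v 1 + Finsupp.single v 1 :=
        (tsub_add_cancel_of_le h1).symm
    _ = mono τ - Finsupp.single v 1 + Finsupp.single v 1 := by rw [h]
    _ = mono τ := tsub_add_cancel_of_le h2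

lemma pderiv_det_GM (v : Fin n × Fin n) :
    pderiv v (GM k n).det = ∑ σ : Equiv.Perm (Fin n),
      monomial (mono σ - Finsupp.single v 1)
        (((Equiv.Perm.sign σ : ℤ) : k) * (mono σ v : k)) := by
  rw [det_GM, map_sum]
  exact Finset.sum_congr rfl fun σ _ => pderiv_monomial

lemma pderiv_det_GM_ne_zero (v : Fin n × Fin n) : pderiv v (GM k n).det ≠ 0 := by
  classical
  obtain ⟨i, j⟩ := v
  set τ : Equiv.Perm (Fin n) := Equiv.swap i j with hτdef
  have hτ : τ j = i := Equiv.swap_apply_right i j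
  have hmτ : mono τ (i, j) = 1 := by rw [mono_apply, if_pos hτ]
  intro h0
  have hc : coeff (mono τ - Finsupp.single (i, j) 1) (pderiv (i, j) (GM k n).det) = 0 := by
    rw [h0, coeff_zero]
  rw [pderiv_det_GM, coeff_sum, Finset.sum_eq_single τ] at hc
  · rw [coeff_monomial, if_pos rfl, hmτ] at hc
    push_cast at hc
    rw [mul_one] at hc
    exact sign_cast_ne_zero τ hc
  · intro σ _ hστ
    rw [coeff_monomial]
    by_cases hσv : mono σ (i, j) = 0
    · rw [hσv]; push_cast; rw [mul_zero]; exact ite_self 0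
    · have hσ1 : mono σ (i, j) = 1 := le_antisymm (mono_le_one σ _) (Nat.one_le_iff_ne_zero.mpr hσv)
      rw [if_neg (fun he => hστ (mono_sub_single_inj hσ1 hmτ he))]
  · simp

lemma pderiv_pderiv_det_GM {v w : Fin n × Fin n} (h : v.1 = w.1 ∨ v.2 = w.2) :
    pderiv v (pderiv w (GM k n).det) = 0 := by
  rw [pderiv_det_GM, map_sum]
  apply Finset.sum_eq_zero
  intro σ _
  rw [pderiv_monomial]
  convert monomial_zero (s := mono σ - Finsupp.single w 1 - Finsupp.single v 1) using 2
  by_cases hσw : mono σ w = 0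
  · rw [hσw]; push_cast; ring
  · have hσ1 : mono σ w = 1 := le_antisymm (mono_le_one σ _) (Nat.one_le_iff_ne_zero.mpr hσw)
    have hw : σ w.2 = w.1 := by
      have := mono_apply σ w.1 w.2
      rw [show ((w.1, w.2) : Fin n × Fin n) = w from rfl] at this
      rw [this] at hσ1
      by_contra hc
      rw [if_neg hc] at hσ1
      exact one_ne_zero hσ1.symm
    have hzero : (mono σ - Finsupp.single w 1 : (Fin n × Fin n) →₀ ℕ) v = 0 := by
      rw [Finsupp.tsub_apply]
      by_cases hvw : v = w
      · subst hvw; rw [hσ1, Finsupp.single_apply, if_pos rfl]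
      · rw [Finsupp.single_apply, if_neg (fun hh => hvw hh.symm), Nat.sub_zero]
        have hv : mono σ v = if σ v.2 = v.1 then 1 else 0 := by
          have := mono_apply σ v.1 v.2
          rwa [show ((v.1, v.2) : Fin n × Fin n) = v from rfl] at this
        rw [hv, if_neg]
        intro hc
        rcases h with h | h
        · have : σ v.2 = σ w.2 := by rw [hc, hw, h]
          exact hvw (Prod.ext h (σ.injective this))
        · exact hvw (Prod.ext (by rw [← hc, h, hw]) h)
    rw [hzero]
    push_cast
    ring


lemma degreeOf_mul_eq' {τ : Type} [Fintype τ] [DecidableEq τ] (v : τ)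
    {f g : MvPolynomial τ k} (hf : f ≠ 0) (hg : g ≠ 0) :
    degreeOf v (f * g) = degreeOf v f + degreeOf v g := by
  classical
  obtain ⟨m, hm⟩ : ∃ m, Fintype.card τ = m + 1 :=
    ⟨Fintype.card τ - 1, (Nat.succ_pred_eq_of_pos (Fintype.card_pos_iff.mpr ⟨v⟩)).symm⟩
  set e' : τ ≃ Fin (m + 1) :=
    ((Fintype.equivFin τ).trans (finCongr hm)).trans
      (Equiv.swap (((Fintype.equivFin τ).trans (finCongr hm)) v) 0) with he'def
  have he'v : e' v = 0 := Equiv.swap_apply_left _ _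
  have hdeg : ∀ p : MvPolynomial τ k, degreeOf v p = degreeOf 0 (rename e' p) := by
    intro p
    rw [← he'v, degreeOf_rename_of_injective e'.injective]
  have hren : ∀ p : MvPolynomial τ k, p ≠ 0 → rename (⇑e') p ≠ 0 := by
    intro p hp h
    exact hp (rename_injective _ e'.injective (by rw [h, map_zero]))
  have hfse : ∀ p : MvPolynomial (Fin (m + 1)) k, p ≠ 0 → finSuccEquiv k m p ≠ 0 := by
    intro p hp h
    exact hp ((finSuccEquiv k m).injective (by rw [h, map_zero]))
  rw [hdeg, hdeg, hdeg, _root_.map_mul, ← natDegree_finSuccEquiv, ← natDegree_finSuccEquiv,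
    ← natDegree_finSuccEquiv, _root_.map_mul,
    Polynomial.natDegree_mul (hfse _ (hren _ hf)) (hfse _ (hren _ hg))]


lemma isUnit_right_of_factor (hn : 1 ≤ n) {f g : MvPolynomial (Fin n × Fin n) k}
    (hfg : (GM k n).det = f * g)
    (h0 : pderiv ((⟨0, hn⟩ : Fin n), (⟨0, hn⟩ : Fin n)) f ≠ 0) : IsUnit g := by
  classical
  have hdet := det_GM_ne_zero (k := k) (n := n)
  have hf : f ≠ 0 := by rintro rfl; rw [zero_mul] at hfg; exact hdet hfg
  have hg : g ≠ 0 := by rintro rfl; rw [mul_zero] at hfg; exact hdet hfg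
  have split : ∀ v, degreeOf v f = 0 ∨ degreeOf v g = 0 := by
    intro v
    have h1 := degreeOf_det_le_one (k := k) v
    rw [hfg, degreeOf_mul_eq' v hf hg] at h1
    omega
  have fside : ∀ v, pderiv v f ≠ 0 → pderiv v g = 0 := by
    intro v hv
    rcases split v with h | h
    · exact absurd (pderiv_eq_zero_of_degreeOf_eq_zero h) hv
    · exact pderiv_eq_zero_of_degreeOf_eq_zero h
  have gside : ∀ v, pderiv v g ≠ 0 → pderiv v f = 0 := by
    intro v hv
    rcases split v with h | h
    · exact pderiv_eq_zero_of_degreeOf_eq_zero h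
    · exact absurd (pderiv_eq_zero_of_degreeOf_eq_zero h) hv
  have same : ∀ v w : Fin n × Fin n, (v.1 = w.1 ∨ v.2 = w.2) →
      pderiv v f ≠ 0 → pderiv w g ≠ 0 → False := by
    intro v w hvw hvf hwg
    have hgv : pderiv v g = 0 := fside v hvf
    have hfw : pderiv w f = 0 := gside w hwg
    have key := pderiv_pderiv_det_GM (k := k) hvw
    rw [hfg, pderiv_mul, hfw, zero_mul, zero_add, pderiv_mul,
      pderiv_pderiv_comm, hgv, map_zero, mul_zero, add_zero] at key
    exact (mul_ne_zero hvf hwg) key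
  set z : Fin n := ⟨0, hn⟩ with hz
  have hgz : ∀ w : Fin n × Fin n, pderiv w g = 0 := by
    rintro ⟨a, b⟩
    by_contra hwg
    have hor : pderiv (z, b) f ≠ 0 ∨ pderiv (z, b) g ≠ 0 := by
      by_contra hc
      push_neg at hc
      have hd := pderiv_det_GM_ne_zero (k := k) (z, b)
      rw [hfg, pderiv_mul, hc.1, hc.2, zero_mul, mul_zero, add_zero] at hd
      exact hd rfl
    rcases hor with h | h
    · exact same (z, b) (a, b) (Or.inr rfl) h hwg
    · exact same (z, z) (z, b) (Or.inl rfl) h0 h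
  have hdegg : ∀ v, degreeOf v g = 0 := by
    intro v
    rcases split v with h | h
    · exfalso
      have hd := pderiv_det_GM_ne_zero (k := k) v
      rw [hfg, pderiv_mul, pderiv_eq_zero_of_degreeOf_eq_zero h, zero_mul, zero_add,
        hgz v, mul_zero] at hd
      exact hd rfl
    · exact h
  have hgC : g = C (coeff 0 g) := by
    apply MvPolynomial.ext
    intro m
    rw [coeff_C]
    by_cases hm : (0 : (Fin n × Fin n) →₀ ℕ) = m
    · rw [if_pos hm, ← hm]
    · rw [if_neg hm]
      by_contra hc
      have hms : m ∈ g.support := MvPolynomial.mem_support_iff.mpr hc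
      apply hm
      apply Finsupp.ext
      intro v
      have := (degreeOf_le_iff (d := 0)).mp (hdegg v).le m hms
      simp only [Finsupp.coe_zero, Pi.zero_apply]
      omega
  rw [hgC]
  have hc0 : coeff 0 g ≠ 0 := fun h => hg (by rw [hgC, h, map_zero])
  exact (isUnit_iff_ne_zero.mpr hc0).map C

lemma irreducible_det (hn : 1 ≤ n) : Irreducible ((GM k n).det) := by
  classical
  set v : Fin n × Fin n := ((⟨0, hn⟩ : Fin n), (⟨0, hn⟩ : Fin n)) with hv
  constructor
  · intro hu
    obtain ⟨u, hu'⟩ := hu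
    have h1 : (u : MvPolynomial (Fin n × Fin n) k) *
        ((u⁻¹ : (MvPolynomial (Fin n × Fin n) k)ˣ) : MvPolynomial (Fin n × Fin n) k)
        = 1 := u.mul_inv
    have hne1 : (u : MvPolynomial (Fin n × Fin n) k) ≠ 0 := by
      intro h; rw [h, zero_mul] at h1; exact one_ne_zero h1.symm
    have hne2 : ((u⁻¹ : (MvPolynomial (Fin n × Fin n) k)ˣ) : MvPolynomial (Fin n × Fin n) k)
        ≠ 0 := by
      intro h; rw [h, mul_zero] at h1; exact one_ne_zero h1.symm
    have hd := degreeOf_mul_eq' v hne1 hne2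
    rw [h1] at hd
    have h1' : degreeOf v (1 : MvPolynomial (Fin n × Fin n) k) = 0 := by
      rw [← C_1, degreeOf_C]
    rw [h1'] at hd
    have hdeg0 : degreeOf v (u : MvPolynomial (Fin n × Fin n) k) = 0 := by omega
    have := pderiv_det_GM_ne_zero (k := k) v
    rw [← hu'] at this
    exact this (pderiv_eq_zero_of_degreeOf_eq_zero hdeg0)
  · intro f g hfg
    have hor : pderiv v f ≠ 0 ∨ pderiv v g ≠ 0 := by
      by_contra hc
      push_neg at hc
      have hd := pderiv_det_GM_ne_zero (k := k) v
      rw [hfg, pderiv_mul, hc.1, hc.2, zero_mul, mul_zero, add_zero] at hd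
      exact hd rfl
    rcases hor with h | h
    · exact Or.inr (isUnit_right_of_factor hn hfg h)
    · exact Or.inl (isUnit_right_of_factor hn (hfg.trans (mul_comm f g)) h)

lemma prime_det (hn : 1 ≤ n) : Prime ((GM k n).det) :=
  (UniqueFactorizationMonoid.irreducible_iff_prime).mp (irreducible_det hn)

end Statement4Aux

/-- Let `R = k[x_{ij}]` be the polynomial ring in `n²` variables and
`X = (x_{ij})` the generic `n × n` matrix.  Then the annihilator of the `R`-module
`coker(X : Rⁿ → Rⁿ)` is the principal ideal generated by `det X`, and this ideal is prime. -/
theorem statement4 (k : Type) [Field k] (n : ℕ) (hn : 1 ≤ n) :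
    (Module.annihilator (MvPolynomial (Fin n × Fin n) k)
        ((Fin n → MvPolynomial (Fin n × Fin n) k) ⧸
          LinearMap.range (Matrix.mulVecLin
            (Matrix.of fun i j : Fin n => (MvPolynomial.X (i, j) :
              MvPolynomial (Fin n × Fin n) k)))) =
      Ideal.span {(Matrix.of fun i j : Fin n => (MvPolynomial.X (i, j) :
        MvPolynomial (Fin n × Fin n) k)).det}) ∧
    (Ideal.span {(Matrix.of fun i j : Fin n => (MvPolynomial.X (i, j) :
        MvPolynomial (Fin n × Fin n) k)).det}).IsPrime := by
  classical
  set R := MvPolynomial (Fin n × Fin n) k with hR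
  set X : Matrix (Fin n) (Fin n) R :=
    Matrix.of fun i j : Fin n => (MvPolynomial.X (i, j) : R) with hXdef
  have hprime : Prime X.det := Statement4Aux.prime_det hn
  have hdetne : X.det ≠ 0 := hprime.ne_zero
  have hspan : (Ideal.span {X.det}).IsPrime := (Ideal.span_singleton_prime hdetne).mpr hprime
  refine ⟨le_antisymm ?_ ?_, hspan⟩
  · intro r hr
    rw [Module.mem_annihilator] at hr
    have hcol : ∀ j : Fin n, ∃ w : Fin n → R, X.mulVec w = r • (Pi.single j 1 : Fin n → R) := by
      intro j
      have h := hr (Submodule.Quotient.mk (Pi.single j 1 : Fin n → R))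
      rw [← Submodule.Quotient.mk_smul, Submodule.Quotient.mk_eq_zero] at h
      obtain ⟨w, hw⟩ := h
      exact ⟨w, by rw [← Matrix.mulVecLin_apply]; exact hw⟩
    choose W hW using hcol
    set Y : Matrix (Fin n) (Fin n) R := Matrix.of fun i j => W j i with hYdef
    have hXY : X * Y = r • (1 : Matrix (Fin n) (Fin n) R) := by
      ext i j
      have h := congrFun (hW j) i
      simp only [Matrix.mulVec, dotProduct, Pi.smul_apply] at h
      simp only [Matrix.mul_apply, Matrix.smul_apply, Matrix.one_apply, hYdef, Matrix.of_apply]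
      rw [h]
      by_cases hij : i = j
      · subst hij; simp
      · simp [Pi.single_apply, hij]
    have hdet2 : X.det * Y.det = r ^ n := by
      rw [← Matrix.det_mul, hXY, Matrix.det_smul, Matrix.det_one, mul_one, Fintype.card_fin]
    exact hspan.mem_of_pow_mem n (Ideal.mem_span_singleton.mpr ⟨Y.det, hdet2.symm⟩)
  · rw [Ideal.span_le, Set.singleton_subset_iff, SetLike.mem_coe, Module.mem_annihilator]
    intro m
    obtain ⟨v, rfl⟩ := Submodule.Quotient.mk_surjective _ m
    rw [← Submodule.Quotient.mk_smul, Submodule.Quotient.mk_eq_zero]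
    exact ⟨Matrix.cramer X v, by rw [Matrix.mulVecLin_apply, Matrix.mulVec_cramer]⟩
end

section
/- For every nonzero finite-dimensional A-module M, the annihilator of the R-module F_1(M) is a principal ideal of R. -/
open TensorProduct
open Matrix

/-- Over a UFD, the annihilator of the cokernel of an endomorphism of a finite free module
with nonzero determinant is principal. -/
lemma ann_coker_isPrincipal {R : Type*} [CommRing R] [IsDomain R]
    [UniqueFactorizationMonoid R] {n : ℕ} {V : Type*} [AddCommGroup V] [Module R V]
    (B : Module.Basis (Fin n) R V) (φ : V →ₗ[R] V)
    (hD : (LinearMap.toMatrix B B φ).det ≠ 0) :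
    (Module.annihilator R (V ⧸ LinearMap.range φ)).IsPrincipal := by
  classical
  set P : Matrix (Fin n) (Fin n) R := LinearMap.toMatrix B B φ with hPdef
  set D : R := P.det with hDdef
  set c : Fin n × Fin n → R := fun p => P.adjugate p.1 p.2 with hcdef
  have mem_iff : ∀ r : R, r ∈ Module.annihilator R (V ⧸ LinearMap.range φ) ↔
      ∀ x : V, r • x ∈ LinearMap.range φ := by
    intro r
    rw [Module.mem_annihilator]
    constructor
    · intro h x
      have := h (Submodule.Quotient.mk x)
      rwa [← Submodule.Quotient.mk_smul, Submodule.Quotient.mk_eq_zero] at this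
    · intro h z
      obtain ⟨x, rfl⟩ := Submodule.Quotient.mk_surjective _ z
      rw [← Submodule.Quotient.mk_smul, Submodule.Quotient.mk_eq_zero]
      exact h x
  have key : ∀ r : R, r ∈ Module.annihilator R (V ⧸ LinearMap.range φ) ↔
      ∀ p : Fin n × Fin n, D ∣ r * c p := by
    intro r
    rw [mem_iff]
    constructor
    · intro h p
      obtain ⟨v, hv⟩ := h (B p.2)
      have h1 : P *ᵥ ⇑(B.repr v) = ⇑(B.repr (r • B p.2)) := by
        rw [hPdef, LinearMap.toMatrix_mulVec_repr, hv]
      have h2 : D • ⇑(B.repr v) = r • fun i => P.adjugate i p.2 * 1 := by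
        calc D • ⇑(B.repr v) = (P.adjugate * P) *ᵥ ⇑(B.repr v) := by
              rw [Matrix.adjugate_mul, Matrix.smul_mulVec, Matrix.one_mulVec]
          _ = P.adjugate *ᵥ (P *ᵥ ⇑(B.repr v)) := (Matrix.mulVec_mulVec _ _ _).symm
          _ = P.adjugate *ᵥ ⇑(B.repr (r • B p.2)) := by rw [h1]
          _ = P.adjugate *ᵥ (r • ⇑(B.repr (B p.2))) := by
              rw [_root_.map_smul, Finsupp.coe_smul]
          _ = r • (P.adjugate *ᵥ ⇑(B.repr (B p.2))) := Matrix.mulVec_smul _ _ _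
          _ = r • fun i => P.adjugate i p.2 * 1 := by
              rw [Module.Basis.repr_self, Finsupp.single_eq_pi_single, Matrix.mulVec_single]
              congr 1
      have h3 := congrFun h2 p.1
      simp only [Pi.smul_apply, smul_eq_mul, mul_one] at h3
      exact ⟨B.repr v p.1, by rw [← h3]⟩
    · intro h x
      set cv : Fin n → R := ⇑(B.repr x) with hcv
      have hdvd : ∀ j, ∃ u, (P.adjugate *ᵥ (r • cv)) j = D * u := by
        intro j
        have : D ∣ (P.adjugate *ᵥ (r • cv)) j := by
          simp only [Matrix.mulVec, dotProduct]
          refine Finset.dvd_sum fun i _ => ?_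
          have h1 : D ∣ r * P.adjugate j i := h (j, i)
          have : r * P.adjugate j i ∣ P.adjugate j i * (r • cv) i := by
            refine ⟨cv i, ?_⟩
            simp only [Pi.smul_apply, smul_eq_mul]; ring
          exact h1.trans this
        exact this
      choose u hu using hdvd
      refine ⟨B.equivFun.symm u, ?_⟩
      have hrv : ⇑(B.repr (B.equivFun.symm u)) = u := by
        funext j
        have : B.repr (B.equivFun.symm u) j = B.equivFun (B.equivFun.symm u) j := by
          rw [Module.Basis.equivFun_apply]
        rw [this, LinearEquiv.apply_symm_apply]
      have hc2 : D • (P *ᵥ u) = D • (r • cv) := by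
        calc D • (P *ᵥ u) = P *ᵥ (D • u) := (Matrix.mulVec_smul _ _ _).symm
          _ = P *ᵥ (P.adjugate *ᵥ (r • cv)) := by
              have hDu : D • u = P.adjugate *ᵥ (r • cv) := funext fun j => (hu j).symm
              rw [hDu]
          _ = (P * P.adjugate) *ᵥ (r • cv) := Matrix.mulVec_mulVec _ _ _
          _ = D • (r • cv) := by
              rw [Matrix.mul_adjugate, Matrix.smul_mulVec, Matrix.one_mulVec]
      have hPv : P *ᵥ u = r • cv := by
        funext j
        have := congrFun hc2 j
        simp only [Pi.smul_apply, smul_eq_mul] at this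
        exact mul_left_cancel₀ hD this
      apply B.repr.injective
      apply DFunLike.coe_injective
      have h4 : P *ᵥ ⇑(B.repr (B.equivFun.symm u)) = ⇑(B.repr (φ (B.equivFun.symm u))) := by
        rw [hPdef, LinearMap.toMatrix_mulVec_repr]
      rw [hrv] at h4
      show ⇑(B.repr (φ (B.equivFun.symm u))) = ⇑(B.repr (r • x))
      rw [← h4, hPv, _root_.map_smul, Finsupp.coe_smul]
  letI : StrongNormalizationMonoid R := UniqueFactorizationMonoid.normalizationMonoid
  letI : NormalizedGCDMonoid R := UniqueFactorizationMonoid.toNormalizedGCDMonoid R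
  have hq : ∀ p : Fin n × Fin n, ∃ q, D = gcd D (c p) * q := fun p => gcd_dvd_left D (c p)
  choose q hqs using hq
  have hiff : ∀ (r : R) (p : Fin n × Fin n), D ∣ r * c p ↔ q p ∣ r := by
    intro r p
    have hg : gcd D (c p) ≠ 0 := by
      intro h0
      exact hD (by rw [hqs p, h0, zero_mul])
    rw [mul_comm r, ← dvd_gcd_mul_iff_dvd_mul]
    constructor
    · intro hdd
      have : gcd D (c p) * q p ∣ gcd D (c p) * r := by rw [← hqs p]; exact hdd
      exact (mul_dvd_mul_iff_left hg).mp this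
    · intro hdd
      obtain ⟨s, rfl⟩ := hdd
      exact ⟨s, by rw [← mul_assoc, ← hqs p]⟩
  refine ⟨⟨Finset.univ.lcm q, ?_⟩⟩
  ext r
  rw [key, Ideal.submodule_span_eq, Ideal.mem_span_singleton, Finset.lcm_dvd_iff]
  simp only [Finset.mem_univ, true_implies]
  exact forall_congr' fun p => hiff r p

set_option synthInstance.maxHeartbeats 1000000 in
set_option maxHeartbeats 1000000 in
/-- For every nonzero finite-dimensional `A`-module `M`, the annihilator of
the `R`-module `F_1(M)` is a principal ideal of `R`. -/
theorem statement5 (k : Type) [Field k] {A : Type} [Ring A] [Algebra k A]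
    {d : ℕ} (b : Module.Basis (Fin d) k A)
    (M : Type) [AddCommGroup M] [Module k M] [Module A M] [IsScalarTower k A M]
    [Module.Finite k M] [Nontrivial M] :
    (Module.annihilator (polyR k d 1)
        (polyR k d 1 ⊗[k] M ⧸ genSub k (l := 1) b (M := M))).IsPrincipal := by
  classical
  have hgen : genSub k (l := 1) b (M := M) = LinearMap.range (genId k b (0 : Fin 1)) := by
    rw [genSub]
    refine le_antisymm (iSup_le fun j => ?_)
      (le_iSup (fun j : Fin 1 => LinearMap.range (genId k b (M := M) j)) 0)
    rw [Subsingleton.elim j (0 : Fin 1)]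
  rw [hgen]
  apply ann_coker_isPrincipal
    (Algebra.TensorProduct.basis (polyR k d 1) (Module.finBasis k M)) (genId k b (0 : Fin 1))
  set m : Module.Basis (Fin (Module.finrank k M)) k M := Module.finBasis k M with hm
  set N : Fin d → Matrix (Fin (Module.finrank k M)) (Fin (Module.finrank k M)) k :=
    fun i => LinearMap.toMatrix m m (actL k (b i)) with hN
  have hP : LinearMap.toMatrix (Algebra.TensorProduct.basis (polyR k d 1) m)
      (Algebra.TensorProduct.basis (polyR k d 1) m) (genId k b (0 : Fin 1)) =
      ∑ i : Fin d, (MvPolynomial.X (i, 0) : polyR k d 1) •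
        (N i).map (algebraMap k (polyR k d 1)) := by
    rw [genId, _root_.map_sum]
    refine Finset.sum_congr rfl fun i _ => ?_
    rw [_root_.map_smul, LinearMap.toMatrix_baseChange]
  intro h0
  let ε : polyR k d 1 →+* k :=
    (MvPolynomial.aeval (fun q : Fin d × Fin 1 => b.repr 1 q.1) : polyR k d 1 →ₐ[k] k).toRingHom
  have h1 : ε ((LinearMap.toMatrix (Algebra.TensorProduct.basis (polyR k d 1) m)
      (Algebra.TensorProduct.basis (polyR k d 1) m) (genId k b (0 : Fin 1))).det) = 1 := by
    rw [RingHom.map_det, hP, RingHom.mapMatrix_apply]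
    have h2 : ((∑ i : Fin d, (MvPolynomial.X (i, (0 : Fin 1)) : polyR k d 1) •
        (N i).map (algebraMap k (polyR k d 1))).map ε)
        = ∑ i : Fin d, (b.repr 1 i) • N i := by
      funext s t
      simp [ε, Matrix.map_apply, Matrix.sum_apply, Matrix.smul_apply, smul_eq_mul,
        MvPolynomial.algebraMap_eq]
    rw [h2]
    have h3 : ∑ i : Fin d, (b.repr 1 i) • N i = 1 := by
      have h4 : ∑ i : Fin d, (b.repr 1 i) • N i =
          LinearMap.toMatrix m m (∑ i : Fin d, (b.repr 1 i) • actL k (b i)) := by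
        rw [_root_.map_sum]
        refine Finset.sum_congr rfl fun i _ => ?_
        rw [_root_.map_smul]
      have h5 : (∑ i : Fin d, (b.repr 1 i) • actL k (b i)) = (LinearMap.id : M →ₗ[k] M) := by
        let L : A →ₗ[k] Module.End k M :=
          (Algebra.lsmul k k M : A →ₐ[k] Module.End k M).toLinearMap
        have hL : ∀ a : A, actL k (M := M) a = L a := fun a => rfl
        calc ∑ i : Fin d, (b.repr 1 i) • actL k (b i)
            = ∑ i : Fin d, L ((b.repr 1 i) • b i) := by
              refine Finset.sum_congr rfl fun i _ => ?_
              rw [hL]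
              exact (_root_.map_smul L _ _).symm
          _ = L (∑ i : Fin d, (b.repr 1 i) • b i) := (_root_.map_sum L _ _).symm
          _ = L 1 := by rw [Module.Basis.sum_repr b 1]
          _ = LinearMap.id := by
              show ((Algebra.lsmul k k M : A →ₐ[k] Module.End k M) 1 : Module.End k M) =
                LinearMap.id
              rw [_root_.map_one]
              rfl
      rw [h4, h5, LinearMap.toMatrix_id]
    rw [h3, Matrix.det_one]
  rw [h0, map_zero] at h1
  exact zero_ne_one h1
end
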